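/- Let R be a commutative ring and I ⊆ R a nilpotent ideal. If the quotient ring R/I has enough homogeneous polynomials, then R has enough homogeneous polynomials. -/

import Mathlib

/-- A commutative ring `R` has enough homogeneous polynomials if for every `n ≥ 1`
and every finite set `S ⊆ R^n` whose tuples have coprime entries, there is a
nonconstant homogeneous polynomial taking unit values on `S`. -/
def HasEnoughHomogeneousPolynomials (R : Type*) [CommRing R] : Prop :=
  ∀ n : ℕ, 1 ≤ n → ∀ S : Finset (Fin n → R),
    (∀ Q ∈ S, Ideal.span (Set.range Q) = ⊤) →
    ∃ (f : MvPolynomial (Fin n) R) (d : ℕ), 1 ≤ d ∧ f.IsHomogeneous d ∧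
      ∀ Q ∈ S, IsUnit (MvPolynomial.eval Q f)

/-- If `I` is a nilpotent ideal of `R` and `R/I` has enough homogeneous
polynomials, then so does `R`. -/
theorem hasEnoughHomogeneousPolynomials_of_quotient_nilpotent
    (R : Type*) [CommRing R] (I : Ideal R) (hI : ∃ k : ℕ, 1 ≤ k ∧ I ^ k = ⊥)
    (h : HasEnoughHomogeneousPolynomials (R ⧸ I)) :
    HasEnoughHomogeneousPolynomials R := by
  obtain ⟨k, hk1, hk⟩ := hI
  intro n hn S hS
  classical
  set φ := Ideal.Quotient.mk I with hφ
  -- image set in the quotient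
  set S' : Finset (Fin n → R ⧸ I) := S.image (fun Q => φ ∘ Q) with hS'
  have hspan : ∀ Q' ∈ S', Ideal.span (Set.range Q') = ⊤ := by
    intro Q' hQ'
    obtain ⟨Q, hQ, rfl⟩ := Finset.mem_image.mp hQ'
    have : Set.range (φ ∘ Q) = φ '' Set.range Q := Set.range_comp φ Q
    rw [this, ← Ideal.map_span, hS Q hQ, Ideal.map_top]
  obtain ⟨g, d, hd, hg, hgu⟩ := h n hn S' hspan
  -- lift g coefficientwise
  have hsurj : Function.Surjective φ := Ideal.Quotient.mk_surjective
  set f : MvPolynomial (Fin n) R :=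
    ∑ m ∈ g.support, MvPolynomial.monomial m (Function.surjInv hsurj (g.coeff m)) with hf
  have hmap : MvPolynomial.map φ f = g := by
    rw [hf, map_sum]
    simp only [MvPolynomial.map_monomial, Function.surjInv_eq hsurj]
    exact MvPolynomial.support_sum_monomial_coeff g
  have hfhom : f.IsHomogeneous d := by
    apply MvPolynomial.IsHomogeneous.sum
    intro m hm
    refine MvPolynomial.isHomogeneous_monomial _ ?_
    rw [Finsupp.degree_eq_weight_one]
    exact hg (MvPolynomial.mem_support_iff.mp hm)
  refine ⟨f, d, hd, hfhom, fun Q hQ => ?_⟩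
  -- evaluation in quotient is a unit
  have hu : IsUnit (φ (MvPolynomial.eval Q f)) := by
    have : φ (MvPolynomial.eval Q f) = MvPolynomial.eval (φ ∘ Q) g := by
      rw [← hmap, MvPolynomial.eval_map]
      have h2 : MvPolynomial.eval Q f = MvPolynomial.eval₂ (RingHom.id R) Q f := rfl
      rw [h2, MvPolynomial.eval₂_comp_left φ (RingHom.id R) Q f, RingHom.comp_id]
    rw [this]
    exact hgu _ (Finset.mem_image_of_mem _ hQ)
  -- lift unit through nilpotent kernel
  obtain ⟨b, hb⟩ := hsurj ((hu.unit⁻¹ : (R ⧸ I)ˣ) : R ⧸ I)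
  set a := MvPolynomial.eval Q f
  have hnil : IsNilpotent (a * b - 1) := by
    have hmem : a * b - 1 ∈ I := by
      rw [← Ideal.Quotient.eq_zero_iff_mem]
      have : φ (a * b) = 1 := by
        rw [map_mul, hb]
        exact hu.mul_val_inv
      rw [map_sub, map_one, sub_eq_zero]; exact this
    refine ⟨k, ?_⟩
    have : (a * b - 1) ^ k ∈ I ^ k := Ideal.pow_mem_pow hmem k
    rwa [hk, Ideal.mem_bot] at this
  have : IsUnit (a * b) := by
    have := hnil.isUnit_add_one
    simpa using this
  exact isUnit_of_mul_isUnit_left this
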